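/- Let φ be a stability function on an abelian length category A and p ∈ P. Define T_p = {M : φ(N) ≥ p for every nonzero quotient N of M} and F_p = {M : φ(N) < p for every nonzero subobject N of M}. Then (T_p, F_p) is a torsion pair in A: Hom_A(T, F) = 0 for all T ∈ T_p, F ∈ F_p; if Hom_A(T, N) = 0 for all T ∈ T_p then N ∈ F_p; and if Hom_A(M, F) = 0 for all F ∈ F_p then M ∈ T_p. -/

import Mathlib

open CategoryTheory CategoryTheory.Limits

universe u v

variable {C : Type u} [Category.{v} C] [Abelian C] {P : Type*} [LinearOrder P]

/-- The see-saw property for a stability function, on short exact sequences of nonzero objects. -/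
def SeeSaw (φ : C → P) : Prop :=
  ∀ S : ShortComplex C, S.ShortExact →
    ¬ IsZero S.X₁ → ¬ IsZero S.X₂ → ¬ IsZero S.X₃ →
    (φ S.X₁ < φ S.X₂ ∧ φ S.X₂ < φ S.X₃) ∨
    (φ S.X₃ < φ S.X₂ ∧ φ S.X₂ < φ S.X₁) ∨
    (φ S.X₁ = φ S.X₂ ∧ φ S.X₂ = φ S.X₃)

/-- A stability function is constant on isomorphism classes. -/
def IsoInvariant (φ : C → P) : Prop := ∀ ⦃M N : C⦄, (M ≅ N) → φ M = φ N

/-- `M` is φ-semistable: every nonzero proper subobject has phase ≤ φ M. -/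
def Semistable (φ : C → P) (M : C) : Prop :=
  ∀ ⦃L : C⦄ (i : L ⟶ M), Mono i → ¬ IsZero L → ¬ IsIso i → φ L ≤ φ M

/-- `M` is φ-stable: every nonzero proper subobject has phase < φ M. -/
def Stable (φ : C → P) (M : C) : Prop :=
  ∀ ⦃L : C⦄ (i : L ⟶ M), Mono i → ¬ IsZero L → ¬ IsIso i → φ L < φ M

/-- Membership in the torsion class `T_p`: the quotient-object characterization. -/
def TpQuot (φ : C → P) (p : P) (M : C) : Prop :=
  ∀ ⦃N : C⦄ (g : M ⟶ N), Epi g → ¬ IsZero N → p ≤ φ N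

/-- Membership in the torsion-free class `F_p`: the subobject characterization. -/
def Fp (φ : C → P) (p : P) (M : C) : Prop :=
  ∀ ⦃L : C⦄ (i : L ⟶ M), Mono i → ¬ IsZero L → φ L < p

/-- `(T_p, F_p)` is a torsion pair: `Hom(T_p, F_p) = 0`, and each class is maximal with
respect to this vanishing. -/
lemma existsT {C : Type u} [Category.{v} C] [Abelian C]
    [∀ X : C, IsArtinianObject X]
    {P : Type*} [LinearOrder P] (φ : C → P)
    (hss : SeeSaw φ) (hiso : IsoInvariant φ) (p : P)
    (M : C) (hM : ¬ IsZero M) (hφ : p ≤ φ M) :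
    ∃ (T : C) (j : T ⟶ M), Mono j ∧ ¬ IsZero T ∧ TpQuot φ p T := by
  have main : ∀ S : Subobject M, ∀ (N : C) (i : N ⟶ M) (hi : Mono i),
      Subobject.mk i = S → ¬ IsZero N → p ≤ φ N →
      ∃ (T : C) (j : T ⟶ N), Mono j ∧ ¬ IsZero T ∧ TpQuot φ p T := by
    intro S
    induction S using (wellFounded_lt (α := Subobject M)).induction with
    | _ S IH =>
      intro N i hi hS hN hφN
      by_cases hT : TpQuot φ p N
      · exact ⟨N, 𝟙 N, inferInstance, hN, hT⟩
      · simp only [TpQuot, not_forall] at hT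
        obtain ⟨Q, g, hg, hQ, hpQ⟩ := hT
        push_neg at hpQ
        have hgni : ¬ IsIso g := fun h =>
          absurd (hiso (asIso g) ▸ hφN) (not_le.mpr hpQ)
        haveI : Epi g := hg
        -- kernel of g
        set K := kernel g with hK
        have hKz : ¬ IsZero K := by
          intro h
          haveI := Preadditive.mono_of_isZero_kernel g h
          exact hgni (isIso_of_mono_of_epi g)
        -- short exact sequence K → N → Q
        let sc : ShortComplex C := ShortComplex.mk (kernel.ι g) g (kernel.condition g)
        have hse : sc.ShortExact :=
          { exact := sc.exact_of_f_is_kernel (kernelIsKernel g) }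
        have := hss sc hse hKz hN hQ
        have hpK : p ≤ φ K := by
          rcases this with ⟨h1, h2⟩ | ⟨h1, h2⟩ | ⟨h1, h2⟩
          · exact absurd (le_trans hφN h2.le) (not_le.mpr hpQ)
          · exact le_trans hφN h2.le
          · exact absurd (h2 ▸ hφN) (not_le.mpr hpQ)
        haveI : Mono i := hi
        have hle : Subobject.mk (kernel.ι g ≫ i) ≤ Subobject.mk i :=
          Subobject.mk_le_mk_of_comm (kernel.ι g) rfl
        have hlt : Subobject.mk (kernel.ι g ≫ i) < Subobject.mk i := by
          refine lt_of_le_of_ne hle (fun he => ?_)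
          have h2 : Subobject.mk i ≤ Subobject.mk (kernel.ι g ≫ i) := he.ge
          have hfac := Subobject.ofMkLEMk_comp h2
          have hsplit : Subobject.ofMkLEMk i (kernel.ι g ≫ i) h2 ≫ kernel.ι g = 𝟙 N := by
            rw [← cancel_mono i]; simpa using hfac
          haveI : IsSplitEpi (kernel.ι g) := ⟨⟨⟨_, hsplit⟩⟩⟩
          have hg0 : g = 0 := by
            rw [← cancel_epi (kernel.ι g), kernel.condition, comp_zero]
          exact hQ (IsZero.of_epi_eq_zero g hg0)
        rw [hS] at hlt
        obtain ⟨T, j, hj, hTz, hTp⟩ :=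
          IH _ hlt K (kernel.ι g ≫ i) inferInstance rfl hKz hpK
        exact ⟨T, j ≫ kernel.ι g, mono_comp _ _, hTz, hTp⟩
  exact main (Subobject.mk (𝟙 M)) M (𝟙 M) inferInstance rfl hM hφ

lemma existsF {C : Type u} [Category.{v} C] [Abelian C]
    [∀ X : C, IsNoetherianObject X]
    {P : Type*} [LinearOrder P] (φ : C → P)
    (hss : SeeSaw φ) (hiso : IsoInvariant φ) (p : P)
    (M : C) (hM : ¬ IsZero M) (hφ : φ M < p) :
    ∃ (R : C) (q : M ⟶ R), Epi q ∧ ¬ IsZero R ∧ Fp φ p R := by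
  have main : ∀ K : Subobject M, ∀ (Q : C) (g : M ⟶ Q) (hg : Epi g),
      Subobject.mk (kernel.ι g) = K → ¬ IsZero Q → φ Q < p →
      ∃ (R : C) (q : Q ⟶ R), Epi q ∧ ¬ IsZero R ∧ Fp φ p R := by
    intro K
    induction K using (wellFounded_gt (α := Subobject M)).induction with
    | _ K IH =>
      intro Q g hg hK hQ hφQ
      by_cases hF : Fp φ p Q
      · exact ⟨Q, 𝟙 Q, inferInstance, hQ, hF⟩
      · simp only [Fp, not_forall] at hF
        obtain ⟨L, i, hi, hL, hpL⟩ := hF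
        push_neg at hpL
        haveI : Mono i := hi
        haveI : Epi g := hg
        have hini : ¬ IsIso i := fun h =>
          absurd (hiso (asIso i) ▸ hpL) (not_le.mpr hφQ)
        set c := cokernel.π i with hc
        have hQ'z : ¬ IsZero (cokernel i) := by
          intro h
          haveI := Preadditive.epi_of_isZero_cokernel i h
          exact hini (isIso_of_mono_of_epi i)
        let sc : ShortComplex C := ShortComplex.mk i c (cokernel.condition i)
        have hse : sc.ShortExact :=
          { exact := sc.exact_of_g_is_cokernel (cokernelIsCokernel i) }
        have := hss sc hse hL hQ hQ'z
        have hφQ' : φ (cokernel i) < p := by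
          rcases this with ⟨h1, h2⟩ | ⟨h1, h2⟩ | ⟨h1, h2⟩
          · exact absurd (le_trans hpL h1.le) (not_le.mpr hφQ)
          · exact lt_trans h1 hφQ
          · exact absurd (h1 ▸ hpL) (not_le.mpr hφQ)
        -- new quotient g' : M ⟶ cokernel i
        set g' := g ≫ c with hg'
        haveI : Epi g' := epi_comp g c
        have hker0 : kernel.ι g ≫ g' = 0 := by
          rw [hg', ← Category.assoc, kernel.condition, zero_comp]
        have hle : Subobject.mk (kernel.ι g) ≤ Subobject.mk (kernel.ι g') :=
          Subobject.mk_le_mk_of_comm (kernel.lift g' (kernel.ι g) hker0)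
            (kernel.lift_ι _ _ _)
        have hlt : Subobject.mk (kernel.ι g) < Subobject.mk (kernel.ι g') := by
          refine lt_of_le_of_ne hle (fun he => ?_)
          have h2 : Subobject.mk (kernel.ι g') ≤ Subobject.mk (kernel.ι g) := he.ge
          -- show c is mono, contradiction
          have hcmono : Mono c := by
            apply Preadditive.mono_of_isZero_kernel
            have hfst : pullback.fst (kernel.ι c) g ≫ kernel.ι c = 0 := by
              rw [pullback.condition]
              have hsndg' : pullback.snd (kernel.ι c) g ≫ g' = 0 := by
                rw [hg', ← Category.assoc, ← pullback.condition, Category.assoc,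
                  kernel.condition, comp_zero]
              have : pullback.snd (kernel.ι c) g =
                  kernel.lift g' (pullback.snd (kernel.ι c) g) hsndg' ≫ kernel.ι g' := by
                rw [kernel.lift_ι]
              rw [this, ← Subobject.ofMkLEMk_comp h2, Category.assoc, Category.assoc,
                kernel.condition, comp_zero, comp_zero]
            haveI : Epi (pullback.fst (kernel.ι c) g) :=
              Abelian.epi_pullback_of_epi_g _ _
            have hfst0 : pullback.fst (kernel.ι c) g = 0 :=
              zero_of_comp_mono (kernel.ι c) hfst
            exact IsZero.of_epi_eq_zero _ hfst0
          haveI := hcmono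
          have : IsIso c := isIso_of_mono_of_epi c
          have hi0 : i = 0 := by
            rw [← cancel_mono c, cokernel.condition, zero_comp]
          exact hL (IsZero.of_mono_eq_zero i hi0)
        rw [hK] at hlt
        obtain ⟨R, q, hq, hRz, hRF⟩ := IH _ hlt (cokernel i) g' inferInstance rfl hQ'z hφQ'
        exact ⟨R, c ≫ q, epi_comp _ _, hRz, hRF⟩
  exact main (Subobject.mk (kernel.ι (𝟙 M))) M (𝟙 M) inferInstance rfl hM hφ

theorem Tp_Fp_torsion_pair {C : Type u} [Category.{v} C] [Abelian C]
    [∀ X : C, IsNoetherianObject X] [∀ X : C, IsArtinianObject X]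
    {P : Type*} [LinearOrder P] (φ : C → P)
    (hss : SeeSaw φ) (hiso : IsoInvariant φ) (p : P) :
    (∀ ⦃T F : C⦄, TpQuot φ p T → Fp φ p F → ∀ f : T ⟶ F, f = 0) ∧
    (∀ N : C, (∀ ⦃T : C⦄, TpQuot φ p T → ∀ f : T ⟶ N, f = 0) → Fp φ p N) ∧
    (∀ M : C, (∀ ⦃F : C⦄, Fp φ p F → ∀ f : M ⟶ F, f = 0) → TpQuot φ p M) := by
  refine ⟨?_, ?_, ?_⟩
  · intro T F hT hF f
    by_cases hz : IsZero (Abelian.image f)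
    · rw [← Abelian.image.fac f, hz.eq_of_src (Abelian.image.ι f) 0, comp_zero]
    · exact absurd (hF (Abelian.image.ι f) inferInstance hz)
        (not_lt.mpr (hT (Abelian.factorThruImage f) inferInstance hz))
  · intro N hN L i hi hL
    by_contra hle
    push_neg at hle
    obtain ⟨T, j, hj, hTz, hTp⟩ := existsT φ hss hiso p L hL hle
    haveI := hi; haveI := hj
    have := hN hTp (j ≫ i)
    exact hTz (IsZero.of_mono_eq_zero (j ≫ i) this)
  · intro M hM Q g hg hQ
    by_contra hle
    push_neg at hle
    obtain ⟨R, q, hq, hRz, hRF⟩ := existsF φ hss hiso p Q hQ hle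
    haveI := hg; haveI := hq
    have := hM hRF (g ≫ q)
    exact hRz (IsZero.of_epi_eq_zero (g ≫ q) this)
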